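/- Fix an integer n ≥ 2 and let V¹, V² : [0,∞) → ℝ^{n-1} be continuous. If (Z¹, η¹) is a solution of the Skorohod-type problem with data V¹ and (Z², η²) is a solution of the Skorohod-type problem with data V², then for every T > 0 and every k with 1 ≤ k ≤ n-1, sup_{0 ≤ t ≤ T} |Z¹_k(t) - Z²_k(t)| ≤ sup_{0 ≤ t ≤ T, 1 ≤ j ≤ n-1} |V¹_j(t) - V²_j(t)|. -/

import Mathlib

open MeasureTheory

/-- The `(n-1) × (n-1)` tridiagonal matrix `Aⁿ` with `-2` on the diagonal and
`1` on the sub/super-diagonals. -/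
def An (n : ℕ) : Matrix (Fin (n-1)) (Fin (n-1)) ℝ :=
  Matrix.of fun k i => if k = i then -2 else if |(k : ℤ) - (i : ℤ)| = 1 then 1 else 0

/-- `(Z, η)` is a solution of the Skorohod-type problem
`dZ(t) = n²AⁿZ(t)dt + dη(t)`, `Z(t) ≥ -V(t)`, `∫₀ᵗ ⟨Z+V, dη⟩ = 0` with data `V`:
`Z` is continuous with `Z_i(t) ≥ -V_i(t)`; each `η_i` is a continuous nondecreasing
(Stieltjes) function with `η_i(0) = 0`; `Z(t) = ∫₀ᵗ n²AⁿZ(s) ds + η(t)`; and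
`Σ_i ∫_{[0,t]} (Z_i(s) + V_i(s)) dη_i(s) = 0` (Lebesgue–Stieltjes integrals). -/
def IsSkorohodSolution (n : ℕ) (V : ℝ → Fin (n-1) → ℝ)
    (Z : ℝ → Fin (n-1) → ℝ) (η : Fin (n-1) → StieltjesFunction ℝ) : Prop :=
  ContinuousOn Z (Set.Ici 0) ∧
  (∀ t ≥ (0:ℝ), ∀ i, Z t i ≥ -V t i) ∧
  (∀ i, Continuous (η i)) ∧
  (∀ i, η i 0 = 0) ∧
  (∀ t ≥ (0:ℝ), ∀ i,
    Z t i = (∫ s in (0:ℝ)..t, (n : ℝ)^2 * (An n).mulVec (Z s) i) + η i t) ∧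
  (∀ t ≥ (0:ℝ),
    ∑ i, ∫ s in Set.Icc (0:ℝ) t, (Z s i + V s i) ∂((η i).measure) = 0)

/-- If `(Z¹, η¹)`, `(Z², η²)` solve the Skorohod-type problems with data `V¹`, `V²`,
then `sup_{0≤t≤T} |Z¹_k(t) - Z²_k(t)| ≤ sup_{0≤t≤T, 1≤j≤n-1} |V¹_j(t) - V²_j(t)|`. -/
lemma An_offdiag_nonneg {n : ℕ} {k i : Fin (n-1)} (h : k ≠ i) : 0 ≤ An n k i := by
  simp only [An, Matrix.of_apply, if_neg h]
  split <;> norm_num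

lemma An_row_sum_le {n : ℕ} (k : Fin (n-1)) :
    ∑ i ∈ Finset.univ.erase k, An n k i ≤ 2 := by
  have h1 : ∀ i ∈ Finset.univ.erase k, An n k i =
      if |(k : ℤ) - (i : ℤ)| = 1 then (1:ℝ) else 0 := by
    intro i hi
    have : k ≠ i := (Finset.ne_of_mem_erase hi).symm
    simp [An, this]
  rw [Finset.sum_congr rfl h1, ← Finset.sum_filter]
  rw [Finset.sum_const, nsmul_eq_mul, mul_one]
  have hcard : ((Finset.univ.erase k).filter
      (fun i : Fin (n-1) => |(k : ℤ) - (i : ℤ)| = 1)).card ≤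
      ({(k:ℤ)-1, (k:ℤ)+1} : Finset ℤ).card := by
    apply Finset.card_le_card_of_injOn (fun i : Fin (n-1) => ((i : ℕ) : ℤ))
    · intro a ha
      simp only [Finset.mem_coe, Finset.mem_filter] at ha
      have := ha.2
      rw [abs_eq (by norm_num)] at this
      simp only [Finset.mem_coe, Finset.mem_insert, Finset.mem_singleton]
      omega
    · intro a _ b _ hab
      simp only at hab; exact Fin.ext (by exact_mod_cast hab)
  have h2 : ({(k:ℤ)-1, (k:ℤ)+1} : Finset ℤ).card ≤ 2 :=
    (Finset.card_insert_le _ _).trans (by simp)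
  exact_mod_cast hcard.trans h2

lemma An_mulVec_nonpos {n : ℕ} (k : Fin (n-1)) (w : Fin (n-1) → ℝ)
    (hmax : ∀ i, w i ≤ w k) (hpos : 0 ≤ w k) : (An n).mulVec w k ≤ 0 := by
  have hdiag : An n k k = -2 := by simp [An]
  rw [Matrix.mulVec, dotProduct]
  rw [← Finset.add_sum_erase _ _ (Finset.mem_univ k), hdiag]
  have hS : ∑ i ∈ Finset.univ.erase k, An n k i * w i ≤
      (∑ i ∈ Finset.univ.erase k, An n k i) * w k := by
    rw [Finset.sum_mul]
    apply Finset.sum_le_sum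
    intro i hi
    exact mul_le_mul_of_nonneg_left (hmax i)
      (An_offdiag_nonneg ((Finset.ne_of_mem_erase hi).symm))
  have h2 : (∑ i ∈ Finset.univ.erase k, An n k i) * w k ≤ 2 * w k :=
    mul_le_mul_of_nonneg_right (An_row_sum_le k) hpos
  nlinarith
lemma eta_incr_zero (n : ℕ) (V Z : ℝ → Fin (n-1) → ℝ) (η : Fin (n-1) → StieltjesFunction ℝ)
    (h : IsSkorohodSolution n V Z η) (hV : ContinuousOn V (Set.Ici 0))
    (k : Fin (n-1)) (s t0 : ℝ) (hs : 0 ≤ s) (hst : s ≤ t0) (c : ℝ) (hc : 0 < c)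
    (hge : ∀ r ∈ Set.Ioc s t0, c ≤ Z r k + V r k) :
    η k t0 = η k s := by
  obtain ⟨hZc, hZV, hηc, hηz, hZeq, hcomp⟩ := h
  have ht0 : (0:ℝ) ≤ t0 := hs.trans hst
  have hterm : ∀ i : Fin (n-1), 0 ≤ ∫ r in Set.Icc (0:ℝ) t0, (Z r i + V r i) ∂((η i).measure) := by
    intro i
    apply setIntegral_nonneg measurableSet_Icc
    intro r hr
    have := hZV r hr.1 i
    linarith
  have hzero : ∫ r in Set.Icc (0:ℝ) t0, (Z r k + V r k) ∂((η k).measure) = 0 :=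
    (Finset.sum_eq_zero_iff_of_nonneg (fun i _ => hterm i)).mp (hcomp t0 ht0) k (Finset.mem_univ k)
  have hcont : ContinuousOn (fun r => Z r k + V r k) (Set.Icc (0:ℝ) t0) := by
    have h1 : ContinuousOn (fun r => Z r k) (Set.Ici (0:ℝ)) :=
      (continuous_apply k).comp_continuousOn hZc
    have h2 : ContinuousOn (fun r => V r k) (Set.Ici (0:ℝ)) :=
      (continuous_apply k).comp_continuousOn hV
    exact (h1.add h2).mono (Set.Icc_subset_Ici_self)
  have hint : IntegrableOn (fun r => Z r k + V r k) (Set.Icc (0:ℝ) t0) ((η k).measure) :=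
    hcont.integrableOn_compact isCompact_Icc
  have hsub : Set.Ioc s t0 ⊆ Set.Icc (0:ℝ) t0 := fun r hr => ⟨hs.trans hr.1.le, hr.2⟩
  have hmono : ∫ r in Set.Ioc s t0, (Z r k + V r k) ∂((η k).measure) ≤
      ∫ r in Set.Icc (0:ℝ) t0, (Z r k + V r k) ∂((η k).measure) := by
    apply setIntegral_mono_set hint
    · filter_upwards [ae_restrict_mem measurableSet_Icc] with r hr
      have := hZV r hr.1 k
      simp only [Pi.zero_apply]
      linarith
    · exact HasSubset.Subset.eventuallyLE hsub
  have hfin : (η k).measure (Set.Ioc s t0) ≠ ⊤ := by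
    rw [StieltjesFunction.measure_Ioc]; exact ENNReal.ofReal_ne_top
  have hlow : c * ((η k).measure (Set.Ioc s t0)).toReal ≤
      ∫ r in Set.Ioc s t0, (Z r k + V r k) ∂((η k).measure) :=
    by have := setIntegral_ge_of_const_le measurableSet_Ioc hfin hge (hint.mono_set hsub); rw [smul_eq_mul, mul_comm] at this; exact this
  have htr : ((η k).measure (Set.Ioc s t0)).toReal ≤ 0 := by
    have h0 := ENNReal.toReal_nonneg (a := (η k).measure (Set.Ioc s t0))
    nlinarith [hlow.trans (hmono.trans_eq hzero)]
  have hmo : η k s ≤ η k t0 := (η k).mono hst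
  rw [StieltjesFunction.measure_Ioc, ENNReal.toReal_ofReal (by linarith)] at htr
  linarith

set_option maxHeartbeats 1000000 in
lemma one_sided (n : ℕ) (hn : 2 ≤ n)
    (V1 V2 : ℝ → Fin (n-1) → ℝ)
    (hV1 : ContinuousOn V1 (Set.Ici 0)) (hV2 : ContinuousOn V2 (Set.Ici 0))
    (Z1 Z2 : ℝ → Fin (n-1) → ℝ) (η1 η2 : Fin (n-1) → StieltjesFunction ℝ)
    (h1 : IsSkorohodSolution n V1 Z1 η1) (h2 : IsSkorohodSolution n V2 Z2 η2)
    (T : ℝ) (hT : 0 < T) (M : ℝ) (hM0 : 0 ≤ M)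
    (hMb : ∀ s ∈ Set.Icc (0:ℝ) T, ∀ j, V2 s j - V1 s j ≤ M) :
    ∀ t ∈ Set.Icc (0:ℝ) T, ∀ k, Z1 t k - Z2 t k ≤ M := by
  have hfin : 0 < n - 1 := by omega
  haveI : NeZero (n - 1) := ⟨by omega⟩
  have hne : (Finset.univ : Finset (Fin (n-1))).Nonempty := Finset.univ_nonempty
  obtain ⟨hZ1c, hZ1V, hη1c, hη1z, hZ1eq, hZ1comp⟩ := h1
  obtain ⟨hZ2c, hZ2V, hη2c, hη2z, hZ2eq, hZ2comp⟩ := h2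
  -- continuity of components
  have hZ1k : ∀ k : Fin (n-1), ContinuousOn (fun r => Z1 r k) (Set.Ici (0:ℝ)) :=
    fun k => (continuous_apply k).comp_continuousOn hZ1c
  have hZ2k : ∀ k : Fin (n-1), ContinuousOn (fun r => Z2 r k) (Set.Ici (0:ℝ)) :=
    fun k => (continuous_apply k).comp_continuousOn hZ2c
  have hV1k : ∀ k : Fin (n-1), ContinuousOn (fun r => V1 r k) (Set.Ici (0:ℝ)) :=
    fun k => (continuous_apply k).comp_continuousOn hV1
  -- drift functions
  set F1 : Fin (n-1) → ℝ → ℝ := fun k r => (n:ℝ)^2 * (An n).mulVec (Z1 r) k with hF1def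
  set F2 : Fin (n-1) → ℝ → ℝ := fun k r => (n:ℝ)^2 * (An n).mulVec (Z2 r) k with hF2def
  have hmulc : ∀ (Z : ℝ → Fin (n-1) → ℝ), ContinuousOn Z (Set.Ici (0:ℝ)) →
      ∀ k : Fin (n-1), ContinuousOn (fun r => (n:ℝ)^2 * (An n).mulVec (Z r) k) (Set.Ici (0:ℝ)) := by
    intro Z hZ k
    apply ContinuousOn.mul continuousOn_const
    have : (fun r => (An n).mulVec (Z r) k) = fun r => ∑ j, An n k j * Z r j := by
      funext r; rfl
    rw [this]
    exact continuousOn_finset_sum _ (fun j _ =>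
      continuousOn_const.mul ((continuous_apply j).comp_continuousOn hZ))
  have hF1c : ∀ k, ContinuousOn (F1 k) (Set.Ici (0:ℝ)) := hmulc Z1 hZ1c
  have hF2c : ∀ k, ContinuousOn (F2 k) (Set.Ici (0:ℝ)) := hmulc Z2 hZ2c
  -- interval integrability
  have hFint : ∀ (F : ℝ → ℝ), ContinuousOn F (Set.Ici (0:ℝ)) → ∀ a b : ℝ, 0 ≤ a → 0 ≤ b →
      IntervalIntegrable F volume a b := by
    intro F hF a b ha hb
    apply ContinuousOn.intervalIntegrable
    apply hF.mono
    intro x hx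
    rcases Set.mem_uIcc.mp hx with h | h
    · exact le_trans ha h.1
    · exact le_trans hb h.1
  -- difference identity
  have hdiff : ∀ (Z : ℝ → Fin (n-1) → ℝ) (η : Fin (n-1) → StieltjesFunction ℝ),
      ContinuousOn Z (Set.Ici 0) →
      (∀ t ≥ (0:ℝ), ∀ i, Z t i = (∫ s in (0:ℝ)..t, (n : ℝ)^2 * (An n).mulVec (Z s) i) + η i t) →
      ∀ (s t : ℝ), 0 ≤ s → s ≤ t → ∀ k,
      Z t k - Z s k = (∫ r in s..t, (n:ℝ)^2 * (An n).mulVec (Z r) k) + (η k t - η k s) := by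
    intro Z η hZc hZeq s t hs hst k
    have ht : (0:ℝ) ≤ t := hs.trans hst
    have e1 := hZeq t ht k
    have e2 := hZeq s hs k
    have hI := intervalIntegral.integral_interval_sub_left
      (hFint _ (hmulc Z hZc k) 0 t le_rfl ht) (hFint _ (hmulc Z hZc k) 0 s le_rfl hs)
    rw [e1, e2]
    rw [← hI]
    ring
  -- initial condition
  have hZzero : ∀ (Z : ℝ → Fin (n-1) → ℝ) (η : Fin (n-1) → StieltjesFunction ℝ),
      (∀ t ≥ (0:ℝ), ∀ i, Z t i = (∫ s in (0:ℝ)..t, (n : ℝ)^2 * (An n).mulVec (Z s) i) + η i t) →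
      (∀ i, η i 0 = 0) → ∀ i, Z 0 i = 0 := by
    intro Z η hZeq hηz i
    have := hZeq 0 le_rfl i
    rwa [intervalIntegral.integral_same, hηz i, zero_add] at this
  -- main claim with ε
  suffices hsuff : ∀ ε > (0:ℝ), ∀ t ∈ Set.Icc (0:ℝ) T, ∀ k, Z1 t k - Z2 t k ≤ M + ε * (1 + t) by
    intro t ht k
    apply le_of_forall_pos_le_add
    intro ε' hε'
    have h1T : (0:ℝ) < 1 + T := by linarith
    have := hsuff (ε' / (1 + T)) (by positivity) t ht k
    have h2 : ε' / (1 + T) * (1 + t) ≤ ε' := by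
      rw [div_mul_eq_mul_div, div_le_iff₀ h1T]
      have : 1 + t ≤ 1 + T := by linarith [ht.2]
      nlinarith
    linarith
  intro ε hε
  by_contra hcon
  push_neg at hcon
  obtain ⟨t1, ht1, k1, hk1⟩ := hcon
  set u : ℝ → Fin (n-1) → ℝ := fun t i => Z1 t i - Z2 t i - M - ε * (1 + t) with hudef
  have huk1 : 0 < u t1 k1 := by simp only [hudef]; linarith
  set f : ℝ → ℝ := fun t => Finset.univ.sup' hne (fun i => u t i) with hfdef
  have hfc : ContinuousOn f (Set.Icc (0:ℝ) T) := by
    apply ContinuousOn.finset_sup'_apply hne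
    intro i _
    apply ContinuousOn.sub
    apply ContinuousOn.sub
    apply ContinuousOn.sub
    · exact (hZ1k i).mono Set.Icc_subset_Ici_self
    · exact (hZ2k i).mono Set.Icc_subset_Ici_self
    · exact continuousOn_const
    · exact (continuousOn_const.mul (continuousOn_const.add continuousOn_id))
  obtain ⟨t0, ht0mem, ht0max⟩ := isCompact_Icc.exists_isMaxOn
    (Set.nonempty_Icc.mpr hT.le) hfc
  obtain ⟨k0, _, hk0⟩ := Finset.exists_max_image Finset.univ (fun i => u t0 i) hne
  have hk0' : ∀ i, u t0 i ≤ u t0 k0 := fun i => hk0 i (Finset.mem_univ i)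
  have hft0 : f t0 = u t0 k0 :=
    le_antisymm (Finset.sup'_le _ _ fun i _ => hk0' i) (Finset.le_sup' _ (Finset.mem_univ k0))
  have hupos : 0 < u t0 k0 := by
    have h1 : u t1 k1 ≤ f t1 := Finset.le_sup' _ (Finset.mem_univ k1)
    have h2 : f t1 ≤ f t0 := ht0max ht1
    have h3 := h1.trans h2
    rw [hft0] at h3
    linarith
  have ht0pos : 0 < t0 := by
    rcases lt_or_eq_of_le ht0mem.1 with h | h
    · exact h
    · exfalso
      have hz1 := hZzero Z1 η1 hZ1eq hη1z k0
      have hz2 := hZzero Z2 η2 hZ2eq hη2z k0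
      rw [hudef] at hupos
      simp only [← h] at hupos
      rw [hz1, hz2] at hupos
      nlinarith
  -- max over indices at t0 in terms of W
  set W : ℝ → Fin (n-1) → ℝ := fun t i => Z1 t i - Z2 t i with hWdef
  have hWmax : ∀ i, W t0 i ≤ W t0 k0 := by
    intro i
    have := hk0' i
    simp only [hudef] at this
    simp only [hWdef]
    linarith
  have hWpos : 0 < W t0 k0 := by
    simp only [hudef] at hupos
    simp only [hWdef]
    nlinarith
  -- drift at t0
  set d : ℝ → ℝ := fun r => F1 k0 r - F2 k0 r with hddef
  have hdW : ∀ r, d r = (n:ℝ)^2 * (An n).mulVec (fun i => Z1 r i - Z2 r i) k0 := by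
    intro r
    simp only [hddef, hF1def, hF2def]
    have : (fun i => Z1 r i - Z2 r i) = Z1 r - Z2 r := rfl
    rw [this, Matrix.mulVec_sub]
    simp [Pi.sub_apply]
    ring
  have hd0 : d t0 ≤ 0 := by
    rw [hdW]
    apply mul_nonpos_of_nonneg_of_nonpos (by positivity)
    exact An_mulVec_nonpos k0 (fun i => Z1 t0 i - Z2 t0 i) hWmax hWpos.le
  -- positivity of Z1 + V1 at t0
  set h0 : ℝ → ℝ := fun r => Z1 r k0 + V1 r k0 with hh0def
  have hh0pos : 0 < h0 t0 := by
    have hz2v := hZ2V t0 ht0mem.1 k0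
    have hmb := hMb t0 ht0mem k0
    simp only [hh0def]
    simp only [hWdef] at hWpos
    have hWM : M < Z1 t0 k0 - Z2 t0 k0 := by
      simp only [hudef] at hupos
      nlinarith
    linarith
  -- continuity at t0 within Icc 0 T
  have hdc : ContinuousWithinAt d (Set.Icc (0:ℝ) T) t0 := by
    have := ((hF1c k0).sub (hF2c k0)).mono (Set.Icc_subset_Ici_self (a := T) (b := (0:ℝ)))
    exact this t0 ht0mem
  have hh0c : ContinuousWithinAt h0 (Set.Icc (0:ℝ) T) t0 := by
    have := ((hZ1k k0).add (hV1k k0)).mono (Set.Icc_subset_Ici_self (a := T) (b := (0:ℝ)))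
    exact this t0 ht0mem
  have hev : ∀ᶠ r in nhdsWithin t0 (Set.Icc (0:ℝ) T), d r < ε/2 ∧ h0 t0 / 2 < h0 r := by
    have e1 : ∀ᶠ r in nhdsWithin t0 (Set.Icc (0:ℝ) T), d r < ε/2 :=
      hdc.eventually_lt_const (hd0.trans_lt (by positivity))
    have e2 : ∀ᶠ r in nhdsWithin t0 (Set.Icc (0:ℝ) T), h0 t0 / 2 < h0 r :=
      hh0c.eventually_const_lt (half_lt_self hh0pos)
    exact e1.and e2
  rw [Filter.eventually_iff, Metric.mem_nhdsWithin_iff] at hev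
  obtain ⟨δ, hδ, hball⟩ := hev
  set s : ℝ := max (t0 - δ/2) (t0/2) with hsdef
  have hs0 : 0 < s := lt_max_of_lt_right (by linarith)
  have hst0 : s < t0 := max_lt (by linarith) (by linarith)
  have hgood : ∀ r ∈ Set.Icc s t0, r ∈ Set.Icc (0:ℝ) T ∧ d r < ε/2 ∧ h0 t0 / 2 < h0 r := by
    intro r hr
    have hr1 : (0:ℝ) ≤ r := le_trans hs0.le hr.1
    have hrT : r ≤ T := le_trans hr.2 ht0mem.2
    have hrs : t0 - δ/2 ≤ r := le_trans (le_max_left _ _) hr.1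
    have hrle : r ≤ t0 := hr.2
    have hd : dist r t0 < δ := by
      rw [Real.dist_eq, abs_lt]
      refine ⟨by linarith [hrs, hδ], by linarith [hrle, hδ]⟩
    exact ⟨⟨hr1, hrT⟩, hball ⟨Metric.mem_ball.mpr hd, hr1, hrT⟩⟩
  -- η1 does not increase on [s, t0]
  have hη1const : η1 k0 t0 = η1 k0 s := by
    apply eta_incr_zero n V1 Z1 η1
      ⟨hZ1c, hZ1V, hη1c, hη1z, hZ1eq, hZ1comp⟩ hV1 k0 s t0 hs0.le hst0.le (h0 t0 / 2) (half_pos hh0pos)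
    intro r hr
    have := (hgood r ⟨hr.1.le, hr.2⟩).2.2
    simp only [hh0def] at this
    linarith
  -- integral comparison
  have ht0T : t0 ≤ T := ht0mem.2
  have hIid1 := hdiff Z1 η1 hZ1c hZ1eq s t0 hs0.le hst0.le k0
  have hIid2 := hdiff Z2 η2 hZ2c hZ2eq s t0 hs0.le hst0.le k0
  have hInt1 : IntervalIntegrable (F1 k0) volume s t0 := hFint _ (hF1c k0) s t0 hs0.le (hs0.le.trans hst0.le)
  have hInt2 : IntervalIntegrable (F2 k0) volume s t0 := hFint _ (hF2c k0) s t0 hs0.le (hs0.le.trans hst0.le)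
  have hdint : ∫ r in s..t0, d r ≤ ε/2 * (t0 - s) := by
    have hconst : (∫ r in s..t0, (ε/2 : ℝ)) = ε/2 * (t0 - s) := by
      rw [intervalIntegral.integral_const, smul_eq_mul]; ring
    rw [← hconst]
    apply intervalIntegral.integral_mono_on hst0.le (hInt1.sub hInt2) intervalIntegrable_const
    intro r hr
    exact ((hgood r hr).2.1).le
  have hη2mono : η2 k0 s ≤ η2 k0 t0 := (η2 k0).mono hst0.le
  -- the contradiction
  have hus : u s k0 ≤ u t0 k0 := by
    have h1 : u s k0 ≤ f s := Finset.le_sup' _ (Finset.mem_univ k0)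
    have h2 : f s ≤ f t0 := ht0max ⟨hs0.le, le_trans hst0.le ht0T⟩
    have h3 := h1.trans h2
    rw [hft0] at h3
    linarith
  have hkey : u t0 k0 - u s k0 ≤ -(ε/2) * (t0 - s) := by
    have hWd : W t0 k0 - W s k0 = (∫ r in s..t0, d r) + (η1 k0 t0 - η1 k0 s) - (η2 k0 t0 - η2 k0 s) := by
      have : ∫ r in s..t0, d r = (∫ r in s..t0, F1 k0 r) - (∫ r in s..t0, F2 k0 r) :=
        intervalIntegral.integral_sub hInt1 hInt2
      simp only [hWdef]
      rw [this]
      simp only [hF1def, hF2def] at hIid1 hIid2 ⊢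
      linarith
    simp only [hudef]
    rw [hη1const] at hWd
    simp only [hWdef] at hWd
    have : Z1 t0 k0 - Z2 t0 k0 - (Z1 s k0 - Z2 s k0) ≤ ε/2 * (t0-s) := by
      rw [hWd]; simp only [sub_self, add_zero, zero_sub]
      linarith [hdint]
    nlinarith [hst0]
  have hpos2 : 0 < (ε/2) * (t0 - s) := mul_pos (half_pos hε) (sub_pos.mpr hst0)
  have hneg : -(ε/2) * (t0 - s) < 0 := by rw [neg_mul]; exact neg_lt_zero.mpr hpos2
  exact absurd (hkey.trans_lt hneg) (not_lt.mpr (sub_nonneg.mpr hus))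


theorem skorohod_comparison (n : ℕ) (hn : 2 ≤ n)
    (V1 V2 : ℝ → Fin (n-1) → ℝ)
    (hV1 : ContinuousOn V1 (Set.Ici 0)) (hV2 : ContinuousOn V2 (Set.Ici 0))
    (Z1 Z2 : ℝ → Fin (n-1) → ℝ) (η1 η2 : Fin (n-1) → StieltjesFunction ℝ)
    (h1 : IsSkorohodSolution n V1 Z1 η1) (h2 : IsSkorohodSolution n V2 Z2 η2)
    (T : ℝ) (hT : 0 < T) (k : Fin (n-1)) (t : ℝ) (ht : t ∈ Set.Icc 0 T) :
    |Z1 t k - Z2 t k| ≤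
      sSup {v : ℝ | ∃ s ∈ Set.Icc (0:ℝ) T, ∃ j : Fin (n-1), v = |V1 s j - V2 s j|} := by
  haveI : NeZero (n - 1) := ⟨by omega⟩
  have hne : (Finset.univ : Finset (Fin (n-1))).Nonempty := Finset.univ_nonempty
  set S := {v : ℝ | ∃ s ∈ Set.Icc (0:ℝ) T, ∃ j : Fin (n-1), v = |V1 s j - V2 s j|} with hSdef
  set g : ℝ → ℝ := fun s => Finset.univ.sup' hne (fun j => |V1 s j - V2 s j|) with hgdef
  have hgc : ContinuousOn g (Set.Icc (0:ℝ) T) := by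
    apply ContinuousOn.finset_sup'_apply hne
    intro j _
    exact ((((continuous_apply j).comp_continuousOn hV1).sub
      ((continuous_apply j).comp_continuousOn hV2)).abs).mono Set.Icc_subset_Ici_self
  obtain ⟨sm, hsm, hmax⟩ := isCompact_Icc.exists_isMaxOn (Set.nonempty_Icc.mpr hT.le) hgc
  have hbdd : BddAbove S := by
    refine ⟨g sm, fun v hv => ?_⟩
    obtain ⟨s, hs, j, rfl⟩ := hv
    exact (Finset.le_sup' (fun j => |V1 s j - V2 s j|) (Finset.mem_univ j)).trans (hmax hs)
  have hmem : ∀ s ∈ Set.Icc (0:ℝ) T, ∀ j : Fin (n-1), |V1 s j - V2 s j| ≤ sSup S :=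
    fun s hs j => le_csSup hbdd ⟨s, hs, j, rfl⟩
  have hM0 : 0 ≤ sSup S := le_trans (abs_nonneg _) (hmem 0 ⟨le_rfl, hT.le⟩ k)
  have hb1 : ∀ s ∈ Set.Icc (0:ℝ) T, ∀ j, V2 s j - V1 s j ≤ sSup S := by
    intro s hs j
    have := hmem s hs j
    rw [abs_sub_comm] at this
    exact (le_abs_self _).trans this
  have hb2 : ∀ s ∈ Set.Icc (0:ℝ) T, ∀ j, V1 s j - V2 s j ≤ sSup S := by
    intro s hs j
    exact (le_abs_self _).trans (hmem s hs j)
  have h12 := one_sided n hn V1 V2 hV1 hV2 Z1 Z2 η1 η2 h1 h2 T hT (sSup S) hM0 hb1 t ht k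
  have h21 := one_sided n hn V2 V1 hV2 hV1 Z2 Z1 η2 η1 h2 h1 T hT (sSup S) hM0 hb2 t ht k
  rw [abs_sub_le_iff]
  exact ⟨h12, h21⟩
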